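/- Let c > 0, K > 0, τ* ∈ ℝ, σ* ∈ ℝ, and let g : ℝ → ℝ be continuously differentiable with |g'(y)| ≤ K for all y and g'(y) = 0 for y ∉ [σ*, σ*+1]. For τ < τ* and σ ∈ ℝ define u(τ, σ) = ∫_ℝ g(y) · (4πc(τ*−τ))^{−1/2} · exp( −(y − σ − c(τ*−τ))² / (4c(τ*−τ)) ) dy. Then there exists a constant C depending only on c and K such that for all τ < τ* and all σ ∈ ℝ: |∂_σ u(τ, σ)| ≤ C / √(1 + τ* − τ). -/

import Mathlib

open Real MeasureTheory

private lemma W_int' {c t : ℝ} (hc : 0 < c) (ht : 0 < t) :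
    Integrable (fun z : ℝ => (4 * π * c * t) ^ (-(1:ℝ)/2) * Real.exp (-z ^ 2 / (4 * c * t))) volume := by
  have hb : (0:ℝ) < (4*c*t)⁻¹ := by positivity
  have h := (integrable_exp_neg_mul_sq hb).const_mul ((4 * π * c * t) ^ (-(1:ℝ)/2))
  have heq : (fun z : ℝ => (4 * π * c * t) ^ (-(1:ℝ)/2) * Real.exp (-(4*c*t)⁻¹ * z ^ 2))
      = (fun z : ℝ => (4 * π * c * t) ^ (-(1:ℝ)/2) * Real.exp (-z ^ 2 / (4 * c * t))) := by
    funext z; congr 1; ring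
  exact heq ▸ h

private lemma A_eq' {c t : ℝ} (hc : 0 < c) (ht : 0 < t) :
    (4 * π * c * t) ^ (-(1:ℝ)/2) = (Real.sqrt (4 * π * c * t))⁻¹ := by
  have h4 : (0:ℝ) < 4 * π * c * t := by positivity
  rw [Real.sqrt_eq_rpow, ← Real.rpow_neg h4.le]
  norm_num

private lemma W_integral' {c t : ℝ} (hc : 0 < c) (ht : 0 < t) :
    ∫ z : ℝ, (4 * π * c * t) ^ (-(1:ℝ)/2) * Real.exp (-z ^ 2 / (4 * c * t)) = 1 := by
  have hb : (0:ℝ) < (4*c*t)⁻¹ := by positivity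
  have h4 : (0:ℝ) < 4 * π * c * t := by positivity
  have hg : ∫ z : ℝ, Real.exp (-z ^ 2 / (4 * c * t)) = Real.sqrt (4 * π * c * t) := by
    have h := integral_gaussian ((4*c*t)⁻¹)
    have he : (fun z : ℝ => Real.exp (-(4*c*t)⁻¹ * z ^ 2))
        = fun z : ℝ => Real.exp (-z ^ 2 / (4 * c * t)) := by
      funext z; congr 1; ring
    rw [he] at h
    rw [h]
    congr 1
    field_simp
  rw [MeasureTheory.integral_const_mul, hg, A_eq' hc ht]
  exact inv_mul_cancel₀ (Real.sqrt_pos.mpr h4).ne'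

private lemma shift_eq' (c t : ℝ) (g : ℝ → ℝ) (s : ℝ) :
    (∫ y : ℝ, g y * (4 * π * c * t) ^ (-(1:ℝ)/2) * Real.exp (-(y - s - c * t) ^ 2 / (4 * c * t)))
    = ∫ z : ℝ, g (s + c * t + z) *
        ((4 * π * c * t) ^ (-(1:ℝ)/2) * Real.exp (-z ^ 2 / (4 * c * t))) := by
  rw [← MeasureTheory.integral_add_right_eq_self
    (fun y => g y * (4 * π * c * t) ^ (-(1:ℝ)/2) * Real.exp (-(y - s - c * t) ^ 2 / (4 * c * t)))
    (s + c * t)]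
  congr 1
  funext z
  have h1 : z + (s + c * t) = s + c * t + z := by ring
  have h2 : s + c * t + z - s - c * t = z := by ring
  simp only [h1, h2, mul_assoc]

private lemma heat_hasDerivAt' (c K t : ℝ) (hc : 0 < c) (hK : 0 < K) (ht : 0 < t)
    (g : ℝ → ℝ) (hg : ContDiff ℝ 1 g) (hK' : ∀ y, |deriv g y| ≤ K) (σ : ℝ) :
    HasDerivAt (fun s => ∫ z : ℝ, g (s + c * t + z) *
        ((4 * π * c * t) ^ (-(1:ℝ)/2) * Real.exp (-z ^ 2 / (4 * c * t))))
      (∫ z : ℝ, deriv g (σ + c * t + z) *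
        ((4 * π * c * t) ^ (-(1:ℝ)/2) * Real.exp (-z ^ 2 / (4 * c * t)))) σ := by
  set A : ℝ := (4 * π * c * t) ^ (-(1:ℝ)/2) with hA
  set W : ℝ → ℝ := fun z => A * Real.exp (-z ^ 2 / (4 * c * t)) with hW
  have h4 : (0:ℝ) < 4 * π * c * t := by positivity
  have hA_pos : 0 < A := Real.rpow_pos_of_pos h4 _
  have hW_pos : ∀ z, 0 < W z := fun z => mul_pos hA_pos (Real.exp_pos _)
  have hW_cont : Continuous W := by fun_prop
  have hWint : Integrable W volume := by
    have hb : (0:ℝ) < (4*c*t)⁻¹ := by positivity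
    have h := (integrable_exp_neg_mul_sq hb).const_mul A
    have heq : (fun z : ℝ => A * Real.exp (-(4*c*t)⁻¹ * z ^ 2)) = W := by
      funext z; rw [hW]; congr 1; ring
    exact heq ▸ h
  have hgdiff : Differentiable ℝ g := hg.differentiable one_ne_zero
  have hgderiv_cont : Continuous (deriv g) := hg.continuous_deriv le_rfl
  have hLip : LipschitzWith K.toNNReal g := by
    apply lipschitzWith_of_nnnorm_deriv_le hgdiff
    intro x
    rw [← NNReal.coe_le_coe, coe_nnnorm, Real.coe_toNNReal _ hK.le, Real.norm_eq_abs]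
    exact hK' x
  have hg_bound : ∀ x z : ℝ, |g (x + c * t + z)| ≤ |g (x + c * t)| + K * |z| := by
    intro x z
    have h := hLip.dist_le_mul (x + c * t + z) (x + c * t)
    rw [Real.dist_eq, Real.dist_eq] at h
    have h2 : x + c * t + z - (x + c * t) = z := by ring
    rw [h2, Real.coe_toNNReal _ hK.le] at h
    calc |g (x + c * t + z)| ≤ |g (x + c * t + z) - g (x + c * t)| + |g (x + c * t)| := by
          have := abs_sub_abs_le_abs_sub (g (x + c * t + z)) (g (x + c * t))
          linarith [abs_nonneg (g (x+c*t))]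
      _ ≤ K * |z| + |g (x + c * t)| := by linarith
      _ = |g (x + c * t)| + K * |z| := by ring
  have hZWint : Integrable (fun z : ℝ => |z| * W z) volume := by
    have hb : (0:ℝ) < (4*c*t)⁻¹ := by positivity
    have h := ((integrable_mul_exp_neg_mul_sq hb).abs).const_mul A
    have heq : (fun z : ℝ => A * |z * Real.exp (-(4*c*t)⁻¹ * z ^ 2)|) = fun z : ℝ => |z| * W z := by
      funext z
      rw [abs_mul, abs_of_pos (Real.exp_pos _), hW]
      have : -(4*c*t)⁻¹ * z ^ 2 = -z ^ 2 / (4 * c * t) := by ring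
      rw [this]; ring
    exact heq ▸ h
  have key := hasDerivAt_integral_of_dominated_loc_of_deriv_le (F := fun x z => g (x + c * t + z) * W z)
    (F' := fun x z => deriv g (x + c * t + z) * W z) (x₀ := σ) (bound := fun z => K * W z)
    (s := Metric.ball σ 1) (Metric.ball_mem_nhds σ one_pos)
    (Filter.Eventually.of_forall fun x =>
      (Continuous.aestronglyMeasurable (by fun_prop)))
    ?_ (Continuous.aestronglyMeasurable (by fun_prop))
    (Filter.Eventually.of_forall fun z => ?_) (hWint.const_mul K)
    (Filter.Eventually.of_forall fun z => ?_)
  · exact key.2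
  · refine Integrable.mono' ((hWint.const_mul (|g (σ + c * t)|)).add (hZWint.const_mul K))
      (Continuous.aestronglyMeasurable (by fun_prop))
      (Filter.Eventually.of_forall fun z => ?_)
    rw [Real.norm_eq_abs, abs_mul, abs_of_pos (hW_pos z)]
    have h1 := hg_bound σ z
    have h2 : (0:ℝ) ≤ W z := (hW_pos z).le
    have h3 := mul_le_mul_of_nonneg_right h1 h2
    simp only [Pi.add_apply]
    nlinarith
  · intro x _
    rw [Real.norm_eq_abs, abs_mul, abs_of_pos (hW_pos z)]
    exact mul_le_mul_of_nonneg_right (hK' _) (hW_pos z).le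
  · intro x _
    have h1 : HasDerivAt (fun x : ℝ => x + c * t + z) 1 x := by
      simpa using ((hasDerivAt_id x).add_const (c * t)).add_const z
    have h2 := (hgdiff (x + c * t + z)).hasDerivAt.comp x h1
    simpa using h2.mul_const (W z)

private lemma heat_bound_one' (c K t : ℝ) (hc : 0 < c) (hK : 0 < K) (ht : 0 < t)
    (g : ℝ → ℝ) (hg : ContDiff ℝ 1 g) (hK' : ∀ y, |deriv g y| ≤ K) (σ : ℝ)
    (hWint : Integrable (fun z : ℝ => (4 * π * c * t) ^ (-(1:ℝ)/2) * Real.exp (-z ^ 2 / (4 * c * t))) volume)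
    (hWintegral : ∫ z : ℝ, (4 * π * c * t) ^ (-(1:ℝ)/2) * Real.exp (-z ^ 2 / (4 * c * t)) = 1) :
    |∫ z : ℝ, deriv g (σ + c * t + z) *
        ((4 * π * c * t) ^ (-(1:ℝ)/2) * Real.exp (-z ^ 2 / (4 * c * t)))| ≤ K := by
  set A : ℝ := (4 * π * c * t) ^ (-(1:ℝ)/2) with hA
  set W : ℝ → ℝ := fun z => A * Real.exp (-z ^ 2 / (4 * c * t)) with hW
  have h4 : (0:ℝ) < 4 * π * c * t := by positivity
  have hA_pos : 0 < A := Real.rpow_pos_of_pos h4 _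
  have hW_pos : ∀ z, 0 < W z := fun z => mul_pos hA_pos (Real.exp_pos _)
  have h := norm_integral_le_of_norm_le (f := fun z : ℝ => deriv g (σ + c * t + z) * W z)
    (g := fun z : ℝ => K * W z) (hWint.const_mul K)
    (Filter.Eventually.of_forall fun z => by
      rw [Real.norm_eq_abs, abs_mul, abs_of_pos (hW_pos z)]
      exact mul_le_mul_of_nonneg_right (hK' _) (hW_pos z).le)
  rw [Real.norm_eq_abs] at h
  calc |∫ z : ℝ, deriv g (σ + c * t + z) * W z| ≤ ∫ z : ℝ, K * W z := h
    _ = K * ∫ z : ℝ, W z := MeasureTheory.integral_const_mul K W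
    _ = K := by rw [hWintegral, mul_one]

private lemma heat_bound_two' (c K t σs : ℝ) (hc : 0 < c) (hK : 0 < K) (ht : 0 < t)
    (g : ℝ → ℝ) (hg : ContDiff ℝ 1 g) (hK' : ∀ y, |deriv g y| ≤ K)
    (hsupp : ∀ y, y ∉ Set.Icc σs (σs + 1) → deriv g y = 0) (σ : ℝ) :
    |∫ z : ℝ, deriv g (σ + c * t + z) *
        ((4 * π * c * t) ^ (-(1:ℝ)/2) * Real.exp (-z ^ 2 / (4 * c * t)))|
      ≤ K * (4 * π * c * t) ^ (-(1:ℝ)/2) := by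
  set A : ℝ := (4 * π * c * t) ^ (-(1:ℝ)/2) with hA
  set W : ℝ → ℝ := fun z => A * Real.exp (-z ^ 2 / (4 * c * t)) with hW
  have h4 : (0:ℝ) < 4 * π * c * t := by positivity
  have hA_pos : 0 < A := Real.rpow_pos_of_pos h4 _
  have hW_pos : ∀ z, 0 < W z := fun z => mul_pos hA_pos (Real.exp_pos _)
  have hW_le : ∀ z, W z ≤ A := by
    intro z
    have hct : (0:ℝ) < 4 * c * t := by positivity
    have hexp : Real.exp (-z ^ 2 / (4 * c * t)) ≤ 1 := by
      rw [Real.exp_le_one_iff]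
      exact div_nonpos_of_nonpos_of_nonneg (by nlinarith [sq_nonneg z]) hct.le
    calc W z = A * Real.exp (-z ^ 2 / (4 * c * t)) := rfl
      _ ≤ A * 1 := mul_le_mul_of_nonneg_left hexp hA_pos.le
      _ = A := mul_one A
  set S : Set ℝ := Set.Icc (σs - (σ + c * t)) (σs + 1 - (σ + c * t)) with hS
  have hSmeas : MeasurableSet S := measurableSet_Icc
  have hind_int : Integrable (S.indicator fun _ : ℝ => K * A) volume := by
    refine IntegrableOn.integrable_indicator ?_ hSmeas
    refine (integrableOn_const_iff).mpr (Or.inr ?_)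
    rw [hS, Real.volume_Icc]
    exact ENNReal.ofReal_lt_top
  have h := norm_integral_le_of_norm_le (f := fun z : ℝ => deriv g (σ + c * t + z) * W z)
    (g := S.indicator fun _ : ℝ => K * A) hind_int
    (Filter.Eventually.of_forall fun z => ?_)
  · rw [Real.norm_eq_abs] at h
    calc |∫ z : ℝ, deriv g (σ + c * t + z) * W z| ≤ ∫ z : ℝ, S.indicator (fun _ => K * A) z := h
      _ = (volume S).toReal • (K * A) := integral_indicator_const (K * A) hSmeas
      _ = K * A := by
          rw [hS, Real.volume_Icc]
          have h1 : σs + 1 - (σ + c * t) - (σs - (σ + c * t)) = 1 := by ring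
          rw [h1, ENNReal.toReal_ofReal (by norm_num : (0:ℝ) ≤ 1), one_smul]
  · by_cases hz : σ + c * t + z ∈ Set.Icc σs (σs + 1)
    · have hzS : z ∈ S := by
        rw [hS]
        obtain ⟨h1, h2⟩ := hz
        exact Set.mem_Icc.mpr ⟨by linarith, by linarith⟩
      rw [Set.indicator_of_mem hzS, Real.norm_eq_abs, abs_mul, abs_of_pos (hW_pos z)]
      calc |deriv g (σ + c * t + z)| * W z ≤ K * W z :=
            mul_le_mul_of_nonneg_right (hK' _) (hW_pos z).le
        _ ≤ K * A := mul_le_mul_of_nonneg_left (hW_le z) hK.le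
    · show ‖deriv g (σ + c * t + z) * W z‖ ≤ S.indicator (fun _ => K * A) z
      rw [hsupp _ hz, zero_mul, norm_zero]
      exact Set.indicator_nonneg (fun _ _ => by positivity) z

theorem first_derivative_decay_of_heat_semigroup
    (c K : ℝ) (hc : 0 < c) (hK : 0 < K) :
    ∃ C : ℝ, ∀ (τs σs : ℝ) (g : ℝ → ℝ), ContDiff ℝ 1 g →
      (∀ y, |deriv g y| ≤ K) →
      (∀ y, y ∉ Set.Icc σs (σs + 1) → deriv g y = 0) →
      ∀ (u : ℝ → ℝ → ℝ),
        (∀ (τ σ : ℝ), τ < τs →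
          u τ σ = ∫ y : ℝ, g y * (4 * π * c * (τs - τ)) ^ (-(1 : ℝ) / 2)
            * Real.exp (-(y - σ - c * (τs - τ)) ^ 2 / (4 * c * (τs - τ)))) →
        ∀ (τ σ : ℝ), τ < τs →
          |deriv (fun s => u τ s) σ| ≤ C / Real.sqrt (1 + τs - τ) := by
  refine ⟨K * Real.sqrt 2 * (1 + (Real.sqrt (4 * π * c))⁻¹), ?_⟩
  intro τs σs g hg hK' hsupp u hu τ σ hτ
  have ht : 0 < τs - τ := by linarith
  have hfun : (fun s => u τ s) = fun s => ∫ z : ℝ, g (s + c * (τs - τ) + z) *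
      ((4 * π * c * (τs - τ)) ^ (-(1:ℝ)/2) * Real.exp (-z ^ 2 / (4 * c * (τs - τ)))) := by
    funext s
    rw [hu τ s hτ, shift_eq']
  have hderiv : deriv (fun s => u τ s) σ = ∫ z : ℝ, deriv g (σ + c * (τs - τ) + z) *
      ((4 * π * c * (τs - τ)) ^ (-(1:ℝ)/2) * Real.exp (-z ^ 2 / (4 * c * (τs - τ)))) := by
    rw [hfun]
    exact (heat_hasDerivAt' c K (τs - τ) hc hK ht g hg hK' σ).deriv
  rw [hderiv]
  set D : ℝ := ∫ z : ℝ, deriv g (σ + c * (τs - τ) + z) *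
      ((4 * π * c * (τs - τ)) ^ (-(1:ℝ)/2) * Real.exp (-z ^ 2 / (4 * c * (τs - τ)))) with hD
  have b1 : |D| ≤ K := heat_bound_one' c K (τs - τ) hc hK ht g hg hK' σ (W_int' hc ht) (W_integral' hc ht)
  have b2 : |D| ≤ K * (4 * π * c * (τs - τ)) ^ (-(1:ℝ)/2) :=
    heat_bound_two' c K (τs - τ) σs hc hK ht g hg hK' hsupp σ
  set t : ℝ := τs - τ with htdef
  have h1t : (0:ℝ) < 1 + t := by linarith
  have hs1 : (0:ℝ) < Real.sqrt (1 + t) := Real.sqrt_pos.mpr h1t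
  have hrw : 1 + τs - τ = 1 + t := by rw [htdef]; ring
  rw [hrw]
  rw [le_div_iff₀ hs1]
  rcases le_or_gt t 1 with hcase | hcase
  · have hle : Real.sqrt (1 + t) ≤ Real.sqrt 2 := Real.sqrt_le_sqrt (by linarith)
    have h2 : |D| * Real.sqrt (1 + t) ≤ K * Real.sqrt 2 :=
      mul_le_mul b1 hle (Real.sqrt_nonneg _) hK.le
    have h3 : (0:ℝ) ≤ (Real.sqrt (4 * π * c))⁻¹ := by positivity
    nlinarith [mul_nonneg (mul_nonneg hK.le (Real.sqrt_nonneg 2)) h3]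
  · have h4c : (0:ℝ) < 4 * π * c := by positivity
    have hst : (0:ℝ) < Real.sqrt t := Real.sqrt_pos.mpr (by linarith)
    have hs4c : (0:ℝ) < Real.sqrt (4 * π * c) := Real.sqrt_pos.mpr h4c
    have hAeq : (4 * π * c * t) ^ (-(1:ℝ)/2) = (Real.sqrt (4 * π * c) * Real.sqrt t)⁻¹ := by
      rw [A_eq' hc (by linarith : (0:ℝ) < t), Real.sqrt_mul h4c.le]
    have hle : Real.sqrt (1 + t) ≤ Real.sqrt 2 * Real.sqrt t := by
      rw [← Real.sqrt_mul (by norm_num : (0:ℝ) ≤ 2)]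
      exact Real.sqrt_le_sqrt (by linarith)
    calc |D| * Real.sqrt (1 + t)
        ≤ (K * (4 * π * c * t) ^ (-(1:ℝ)/2)) * (Real.sqrt 2 * Real.sqrt t) :=
          mul_le_mul b2 hle (Real.sqrt_nonneg _) (by positivity)
      _ = K * Real.sqrt 2 * (Real.sqrt (4 * π * c))⁻¹ := by
          rw [hAeq]
          field_simp
      _ ≤ K * Real.sqrt 2 * (1 + (Real.sqrt (4 * π * c))⁻¹) := by
          have : (0:ℝ) ≤ K * Real.sqrt 2 := by positivity
          nlinarith
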